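/- Let N ⊂ ℝⁿ be a nonempty bounded set, c > 0, and F : ℝⁿ → ℝ a C¹ function such that F(z) ≥ F(x) + ∇F(x)·(z−x) + c|z−x|² for all x, z ∈ N. Define H₀(y) = sup_{x ∈ N} [ F(x) + ∇F(x)·(y−x) + c|y−x|² ] for y ∈ ℝⁿ. Then H₀ is finite everywhere, H₀ = F on N, and the function y ↦ H₀(y) − c|y|² is convex; in particular H₀ is a (strongly) convex function on ℝⁿ. -/

import Mathlib

open Real Set Metric
open scoped RealInnerProductSpace

noncomputable section

/-- If `F` is `C¹` and lifts quadratically (with constant `c`) from its tangent planes at points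
of a nonempty bounded set `N`, then `H₀(y) = sup_{x ∈ N} [F(x) + ∇F(x)·(y−x) + c|y−x|²]` is
finite everywhere, agrees with `F` on `N`, and `H₀(y) − c|y|²` is convex (so `H₀` is strongly
convex). -/
theorem statement13 {n : ℕ} (N : Set (EuclideanSpace ℝ (Fin n))) (hne : N.Nonempty)
    (hbd : Bornology.IsBounded N) (c : ℝ) (hc : 0 < c)
    (F : EuclideanSpace ℝ (Fin n) → ℝ) (hF : ContDiff ℝ 1 F)
    (hsep : ∀ x ∈ N, ∀ z ∈ N,
      F x + ⟪gradient F x, z - x⟫ + c * ‖z - x‖ ^ 2 ≤ F z)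
    (H₀ : EuclideanSpace ℝ (Fin n) → ℝ)
    (hH₀ : ∀ y, H₀ y =
      sSup ((fun x => F x + ⟪gradient F x, y - x⟫ + c * ‖y - x‖ ^ 2) '' N)) :
    (∀ y : EuclideanSpace ℝ (Fin n),
      BddAbove ((fun x => F x + ⟪gradient F x, y - x⟫ + c * ‖y - x‖ ^ 2) '' N)) ∧
    (∀ y ∈ N, H₀ y = F y) ∧
    ConvexOn ℝ Set.univ (fun y => H₀ y - c * ‖y‖ ^ 2) := by
  -- continuity of the gradient
  have hgradcont : Continuous (gradient F) := by
    have h1 : Continuous (fderiv ℝ F) := hF.continuous_fderiv one_ne_zero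
    exact ((InnerProductSpace.toDual ℝ _).symm.continuous).comp h1
  -- bounds on N
  obtain ⟨R, hR⟩ := hbd.exists_norm_le
  have hKcomp : IsCompact (closure N) := hbd.isCompact_closure
  obtain ⟨C1, hC1⟩ := hKcomp.exists_bound_of_continuousOn hF.continuous.continuousOn
  obtain ⟨C2, hC2⟩ := hKcomp.exists_bound_of_continuousOn hgradcont.continuousOn
  have hC2nn : 0 ≤ C2 := by
    obtain ⟨x, hx⟩ := hne
    exact le_trans (norm_nonneg _) (hC2 x (subset_closure hx))
  -- Part 1 : bounded above
  have part1 : ∀ y : EuclideanSpace ℝ (Fin n),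
      BddAbove ((fun x => F x + ⟪gradient F x, y - x⟫ + c * ‖y - x‖ ^ 2) '' N) := by
    intro y
    refine ⟨C1 + C2 * (‖y‖ + R) + c * (‖y‖ + R) ^ 2, ?_⟩
    rintro r ⟨x, hx, rfl⟩
    have hx' := subset_closure hx
    have h1 : F x ≤ C1 := le_trans (le_abs_self _) (hC1 x hx')
    have h2 : ‖gradient F x‖ ≤ C2 := hC2 x hx'
    have hxn : ‖x‖ ≤ R := hR x hx
    have h3 : ‖y - x‖ ≤ ‖y‖ + R := le_trans (norm_sub_le _ _) (by linarith)
    have h4 : ⟪gradient F x, y - x⟫ ≤ C2 * (‖y‖ + R) := by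
      calc ⟪gradient F x, y - x⟫ ≤ ‖gradient F x‖ * ‖y - x‖ := real_inner_le_norm _ _
        _ ≤ C2 * (‖y‖ + R) := by
            apply mul_le_mul h2 h3 (norm_nonneg _) hC2nn
    have h5 : c * ‖y - x‖ ^ 2 ≤ c * (‖y‖ + R) ^ 2 := by
      apply mul_le_mul_of_nonneg_left _ hc.le
      exact pow_le_pow_left₀ (norm_nonneg _) h3 2
    dsimp only
    linarith
  -- key algebraic identity
  have key : ∀ x y : EuclideanSpace ℝ (Fin n),
      F x + ⟪gradient F x, y - x⟫ + c * ‖y - x‖ ^ 2 =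
        (F x - ⟪gradient F x, x⟫ + c * ‖x‖ ^ 2) +
          (⟪gradient F x, y⟫ - 2 * c * ⟪x, y⟫) + c * ‖y‖ ^ 2 := by
    intro x y
    have hn : ‖y - x‖ ^ 2 = ‖y‖ ^ 2 - 2 * ⟪y, x⟫ + ‖x‖ ^ 2 := norm_sub_sq_real y x
    rw [inner_sub_right, hn, real_inner_comm y x]
    ring
  -- Part 2
  have part2 : ∀ y ∈ N, H₀ y = F y := by
    intro y hy
    rw [hH₀ y]
    apply le_antisymm
    · apply csSup_le (hne.image _)
      rintro r ⟨x, hx, rfl⟩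
      exact hsep x hx y hy
    · have : F y = F y + ⟪gradient F y, y - y⟫ + c * ‖y - y‖ ^ 2 := by
        simp
      rw [this]
      exact le_csSup (part1 y) ⟨y, hy, rfl⟩
  -- Part 3
  refine ⟨part1, part2, ?_⟩
  refine ⟨convex_univ, ?_⟩
  intro y1 _ y2 _ a b ha hb hab
  simp only [smul_eq_mul]
  rw [hH₀ (a • y1 + b • y2), hH₀ y1, hH₀ y2, sub_le_iff_le_add]
  apply csSup_le (hne.image _)
  rintro r ⟨x, hx, rfl⟩
  -- bounds on the two sups
  have hb1 : F x + ⟪gradient F x, y1 - x⟫ + c * ‖y1 - x‖ ^ 2 ≤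
      sSup ((fun x => F x + ⟪gradient F x, y1 - x⟫ + c * ‖y1 - x‖ ^ 2) '' N) :=
    le_csSup (part1 y1) ⟨x, hx, rfl⟩
  have hb2 : F x + ⟪gradient F x, y2 - x⟫ + c * ‖y2 - x‖ ^ 2 ≤
      sSup ((fun x => F x + ⟪gradient F x, y2 - x⟫ + c * ‖y2 - x‖ ^ 2) '' N) :=
    le_csSup (part1 y2) ⟨x, hx, rfl⟩
  dsimp only
  rw [key x (a • y1 + b • y2)]
  rw [key x y1] at hb1
  rw [key x y2] at hb2
  have hlin1 : ⟪gradient F x, a • y1 + b • y2⟫ =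
      a * ⟪gradient F x, y1⟫ + b * ⟪gradient F x, y2⟫ := by
    rw [inner_add_right, real_inner_smul_right, real_inner_smul_right]
  have hlin2 : ⟪x, a • y1 + b • y2⟫ = a * ⟪x, y1⟫ + b * ⟪x, y2⟫ := by
    rw [inner_add_right, real_inner_smul_right, real_inner_smul_right]
  rw [hlin1, hlin2,
    show (F x - ⟪gradient F x, x⟫ + c * ‖x‖ ^ 2) =
        a * (F x - ⟪gradient F x, x⟫ + c * ‖x‖ ^ 2) +
          b * (F x - ⟪gradient F x, x⟫ + c * ‖x‖ ^ 2) from by rw [← add_mul, hab, one_mul]]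
  linarith [mul_le_mul_of_nonneg_left hb1 ha, mul_le_mul_of_nonneg_left hb2 hb]
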